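/- Let G2 be a group and let C be an infinite cyclic subgroup of G2. If G2 is abelian, assume moreover that G2 is the internal direct sum K ⊕ L of two subgroups with C ≤ K and |L| > 2. Then there exists an automorphism ψ of G2 with ψ ≠ id such that ψ(c) = c for all c ∈ C. -/

import Mathlib

/-- A nontrivial automorphism of a commutative group whose cardinality exceeds 2. -/
lemma exists_nontrivial_aut (H : Type*) [CommGroup H] (hcard : (2 : Cardinal) < Cardinal.mk H) :
    ∃ φ : H ≃* H, φ ≠ MulEquiv.refl H := by
  classical
  by_cases hsq : ∀ x : H, x * x = 1
  · -- exponent 2: view as ZMod 2 vector space, swap two basis vectors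
    letI : Module (ZMod 2) (Additive H) :=
      AddCommGroup.zmodModule (by
        intro x
        show (2 : ℕ) • x = 0
        rw [two_nsmul]
        exact hsq (Additive.toMul x))
    set ι := Module.Basis.ofVectorSpaceIndex (ZMod 2) (Additive H) with hι
    let b : Module.Basis ι (ZMod 2) (Additive H) := Module.Basis.ofVectorSpace (ZMod 2) (Additive H)
    obtain ⟨i, j, hij⟩ : ∃ i j : ι, i ≠ j := by
      by_contra h
      push_neg at h
      have hsub : Subsingleton ι := ⟨h⟩
      have hle : Cardinal.mk H ≤ 2 := by
        calc Cardinal.mk H = Cardinal.mk (ι →₀ ZMod 2) := Cardinal.mk_congr b.repr.toEquiv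
          _ ≤ Cardinal.mk (ι → ZMod 2) :=
              Cardinal.mk_le_of_injective (DFunLike.coe_injective)
          _ = Cardinal.lift.{u_1} (Cardinal.mk (ZMod 2)) ^ Cardinal.lift.{0} (Cardinal.mk ι) :=
              Cardinal.mk_arrow ι (ZMod 2)
          _ ≤ (2 : Cardinal) ^ (1 : Cardinal) := by
              apply Cardinal.power_le_power_left
              · simp
              · rw [Cardinal.lift_le_one_iff]
                exact Cardinal.le_one_iff_subsingleton.mpr hsub
          _ = 2 := by rw [Cardinal.power_one]
      exact absurd hcard (not_lt.mpr hle)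
    let f : Additive H ≃ₗ[ZMod 2] Additive H := b.equiv b (Equiv.swap i j)
    have hfi : f (b i) = b j := by
      rw [Module.Basis.equiv_apply, Equiv.swap_apply_left]
    have hne : f (b i) ≠ b i := by
      rw [hfi]
      exact fun h => hij (b.injective h).symm
    refine ⟨⟨⟨fun x => Additive.toMul (f (Additive.ofMul x)),
      fun x => Additive.toMul (f.symm (Additive.ofMul x)), ?_, ?_⟩, ?_⟩, ?_⟩
    · intro x; simp
    · intro x; simp
    · intro x y
      show Additive.toMul (f (Additive.ofMul x + Additive.ofMul y)) = _
      rw [map_add]; rfl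
    · intro h
      apply hne
      have := DFunLike.congr_fun h (Additive.toMul (b i))
      simpa using congrArg Additive.ofMul this
  · -- some element of order > 2: inversion is nontrivial
    push_neg at hsq
    obtain ⟨x, hx⟩ := hsq
    refine ⟨MulEquiv.inv H, ?_⟩
    intro h
    apply hx
    have := DFunLike.congr_fun h x
    simp only [MulEquiv.inv_apply, MulEquiv.refl_apply] at this
    nth_rewrite 2 [← this]
    exact mul_inv_cancel x

/-- Let `C` be an infinite cyclic subgroup of `G2`; if `G2` is abelian, assume moreover that
`G2 = K ⊕ L` (internal direct sum) with `C ≤ K` and `|L| > 2`. Then `G2` has a nontrivial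
automorphism fixing `C` pointwise. -/
theorem stmt_9 (G2 : Type*) [Group G2] (C : Subgroup G2)
    (hC : ∃ c : G2, ¬IsOfFinOrder c ∧ C = Subgroup.zpowers c)
    (habel : (∀ a b : G2, a * b = b * a) →
      ∃ K L : Subgroup G2,
        (∀ k ∈ K, ∀ l ∈ L, k * l = l * k) ∧
        K ⊓ L = ⊥ ∧ K ⊔ L = ⊤ ∧ C ≤ K ∧ (2 : Cardinal) < Cardinal.mk L) :
    ∃ ψ : G2 ≃* G2, ψ ≠ MulEquiv.refl G2 ∧ ∀ c ∈ C, ψ c = c := by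
  obtain ⟨c, hc, hCz⟩ := hC
  by_cases hcomm : ∀ a b : G2, a * b = b * a
  · -- abelian case
    letI : CommGroup G2 := { ‹Group G2› with mul_comm := hcomm }
    obtain ⟨K, L, hKL, hinf, hsup, hCK, hcard⟩ := habel hcomm
    obtain ⟨φ, hφ⟩ := exists_nontrivial_aut L hcard
    -- the multiplication map K × L →* G2
    let m : K × L →* G2 := (K.subtype.noncommCoprod L.subtype
      (fun k l => hKL k k.2 l l.2))
    have hm : ∀ p : K × L, m p = (p.1 : G2) * (p.2 : G2) := fun p => rfl
    have hminj : Function.Injective m := by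
      rw [injective_iff_map_eq_one]
      rintro ⟨k, l⟩ h
      rw [hm] at h
      have hk : (k : G2) = (l : G2)⁻¹ := eq_inv_of_mul_eq_one_left h
      have hkL : (k : G2) ∈ L := by rw [hk]; exact L.inv_mem l.2
      have hkm : (k : G2) ∈ K ⊓ L := ⟨k.2, hkL⟩
      rw [hinf, Subgroup.mem_bot] at hkm
      have hl : (l : G2) = 1 := by
        have h' := h
        rw [hkm, one_mul] at h'
        exact h'
      exact Prod.ext (Subtype.ext hkm) (Subtype.ext hl)
    have hmsurj : Function.Surjective m := by
      intro g
      have : g ∈ K ⊔ L := hsup ▸ Subgroup.mem_top g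
      rw [Subgroup.mem_sup] at this
      obtain ⟨y, hy, z, hz, hyz⟩ := this
      exact ⟨(⟨y, hy⟩, ⟨z, hz⟩), hyz⟩
    let e : K × L ≃* G2 := MulEquiv.ofBijective m ⟨hminj, hmsurj⟩
    let θ : K × L ≃* K × L := MulEquiv.prodCongr (MulEquiv.refl K) φ
    refine ⟨(e.symm.trans θ).trans e, ?_, ?_⟩
    · intro h
      apply hφ
      ext l
      have hl : e (1, l) = (l : G2) := by
        show m (1, l) = (l : G2); rw [hm]; simp
      have h2 := DFunLike.congr_fun h (e (1, l))
      simp only [MulEquiv.trans_apply, MulEquiv.symm_apply_apply, MulEquiv.refl_apply] at h2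
      have hθ : θ (1, l) = (1, φ l) := by
        show ((MulEquiv.refl K) 1, φ l) = (1, φ l)
        rfl
      rw [hθ] at h2
      have h3 : ((1 : K), φ l) = ((1 : K), l) := e.injective h2
      have h4 := congrArg Prod.snd h3
      simpa using congrArg (Subtype.val) h4
    · intro x hx
      have hxK : x ∈ K := hCK hx
      have hx' : e (⟨x, hxK⟩, 1) = x := by
        show m (⟨x, hxK⟩, 1) = x; rw [hm]; simp
      simp only [MulEquiv.trans_apply]
      rw [← hx', MulEquiv.symm_apply_apply]
      have hθ : θ (⟨x, hxK⟩, 1) = (⟨x, hxK⟩, 1) := by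
        show ((MulEquiv.refl K) ⟨x, hxK⟩, φ 1) = _
        rw [map_one φ]
        rfl
      rw [hθ]
  · -- nonabelian case
    push_neg at hcomm
    obtain ⟨a, b, hab⟩ := hcomm
    by_cases hcen : ∀ g : G2, c * g = g * c
    · refine ⟨MulAut.conj a, ?_, ?_⟩
      · intro h
        apply hab
        have := DFunLike.congr_fun h b
        simp only [MulAut.conj_apply, MulEquiv.refl_apply] at this
        calc a * b = a * b * a⁻¹ * a := by group
          _ = b * a := by rw [this]
      · intro x hx
        rw [hCz, Subgroup.mem_zpowers_iff] at hx
        obtain ⟨k, rfl⟩ := hx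
        have h1 : Commute a c := (hcen a).symm
        have h2 : a * c ^ k = c ^ k * a := (h1.zpow_right k).eq
        show a * c ^ k * a⁻¹ = c ^ k
        rw [h2, mul_inv_cancel_right]
    · push_neg at hcen
      obtain ⟨g, hg⟩ := hcen
      refine ⟨MulAut.conj c, ?_, ?_⟩
      · intro h
        apply hg
        have := DFunLike.congr_fun h g
        simp only [MulAut.conj_apply, MulEquiv.refl_apply] at this
        calc c * g = c * g * c⁻¹ * c := by group
          _ = g * c := by rw [this]
      · intro x hx
        rw [hCz, Subgroup.mem_zpowers_iff] at hx
        obtain ⟨k, rfl⟩ := hx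
        show c * c ^ k * c⁻¹ = c ^ k
        group
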